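/- Suppose the trajectory (A(t), B(t)) follows the gradient flow of the loss L(ABᵀ) + (λ/2)(‖A‖_F² + ‖B‖_F²) with λ > 0, L differentiable, and suppose ‖A(t)‖_F, ‖B(t)‖_F remain bounded by M for all t. Then |(L(A Bᵀ) + (λ/2)(‖A‖_F² + ‖B‖_F²)) − (L(ABᵀ) + λ‖ABᵀ‖_*)| → 0 exponentially as t → ∞. -/

import Mathlib

open Matrix

/-- Squared Frobenius norm of a real matrix. -/
noncomputable def frobSq {m n : ℕ} (A : Matrix (Fin m) (Fin n) ℝ) : ℝ :=
  ∑ i, ∑ j, (A i j) ^ 2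

/-- Frobenius norm. -/
noncomputable def frobNorm {m n : ℕ} (A : Matrix (Fin m) (Fin n) ℝ) : ℝ :=
  Real.sqrt (frobSq A)

lemma wwT_posSemidef {m n : ℕ} (W : Matrix (Fin m) (Fin n) ℝ) :
    (W * Wᵀ).PosSemidef := by
  simpa [Matrix.conjTranspose_eq_transpose_of_trivial] using
    W.posSemidef_self_mul_conjTranspose

/-- The positive semidefinite square root of a positive semidefinite matrix
(the definition `Matrix.PosSemidef.sqrt` of the older Mathlib, since removed). -/
noncomputable def Matrix.PosSemidef.sqrt {n 𝕜 : Type*} [Fintype n] [DecidableEq n] [RCLike 𝕜] [PartialOrder 𝕜]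
    {A : Matrix n n 𝕜} (hA : A.PosSemidef) : Matrix n n 𝕜 :=
  hA.1.eigenvectorUnitary.1 * diagonal ((↑) ∘ (√·) ∘ hA.1.eigenvalues) *
    (star hA.1.eigenvectorUnitary : Matrix n n 𝕜)

/-- Nuclear norm: trace of the PSD square root of `W * Wᵀ`. -/
noncomputable def nuclearNorm {m n : ℕ} (W : Matrix (Fin m) (Fin n) ℝ) : ℝ :=
  (wwT_posSemidef W).sqrt.trace

open scoped MatrixOrder in
lemma Matrix.PosSemidef.sqrt_eq_cfcSqrt {k : ℕ} {X : Matrix (Fin k) (Fin k) ℝ}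
    (hX : X.PosSemidef) : hX.sqrt = CFC.sqrt X := by
  rw [CFC.sqrt_eq_cfc, cfc_nnreal_eq_real _ X, hX.1.cfc_eq]
  simp only [IsHermitian.cfc, Unitary.conjStarAlgAut_apply, Matrix.PosSemidef.sqrt]
  congr 3
  funext i
  simp [hX.eigenvalues_nonneg i]

open scoped MatrixOrder in
lemma Matrix.PosSemidef.posSemidef_sqrt {k : ℕ} {X : Matrix (Fin k) (Fin k) ℝ}
    (hX : X.PosSemidef) : hX.sqrt.PosSemidef := by
  rw [hX.sqrt_eq_cfcSqrt]
  exact (CFC.sqrt_nonneg X).posSemidef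

open scoped MatrixOrder in
lemma Matrix.PosSemidef.sqrt_mul_self {k : ℕ} {X : Matrix (Fin k) (Fin k) ℝ}
    (hX : X.PosSemidef) : hX.sqrt * hX.sqrt = X := by
  rw [hX.sqrt_eq_cfcSqrt]
  exact CFC.sqrt_mul_sqrt_self X hX.nonneg

open scoped MatrixOrder in
lemma Matrix.PosSemidef.sqrt_sq {k : ℕ} {X : Matrix (Fin k) (Fin k) ℝ}
    (hX : X.PosSemidef) : (hX.pow 2).sqrt = X := by
  rw [(hX.pow 2).sqrt_eq_cfcSqrt]
  exact CFC.sqrt_sq X hX.nonneg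

lemma frobSq_nonneg {m n : ℕ} (A : Matrix (Fin m) (Fin n) ℝ) : 0 ≤ frobSq A :=
  Finset.sum_nonneg fun _ _ => Finset.sum_nonneg fun _ _ => sq_nonneg _

lemma frobNorm_nonneg {m n : ℕ} (A : Matrix (Fin m) (Fin n) ℝ) : 0 ≤ frobNorm A :=
  Real.sqrt_nonneg _

lemma frobSq_transpose {m n : ℕ} (A : Matrix (Fin m) (Fin n) ℝ) : frobSq Aᵀ = frobSq A := by
  rw [frobSq, frobSq, Finset.sum_comm]; rfl

lemma frobSq_mul_le {m n p : ℕ} (X : Matrix (Fin m) (Fin n) ℝ) (Y : Matrix (Fin n) (Fin p) ℝ) :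
    frobSq (X * Y) ≤ frobSq X * frobSq Y := by
  have h : ∀ i j, ((X * Y) i j) ^ 2 ≤ (∑ k, X i k ^ 2) * (∑ k, Y k j ^ 2) := by
    intro i j
    simpa [Matrix.mul_apply] using Finset.sum_mul_sq_le_sq_mul_sq Finset.univ (X i) (fun k => Y k j)
  calc frobSq (X * Y) ≤ ∑ i, ∑ j, (∑ k, X i k ^ 2) * (∑ k, Y k j ^ 2) := by
        refine Finset.sum_le_sum fun i _ => Finset.sum_le_sum fun j _ => h i j
    _ = frobSq X * frobSq Y := by
        rw [frobSq, frobSq, Finset.sum_mul]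
        refine Finset.sum_congr rfl fun i _ => ?_
        rw [← Finset.mul_sum]
        congr 1
        rw [Finset.sum_comm]

lemma frobNorm_mul_le {m n p : ℕ} (X : Matrix (Fin m) (Fin n) ℝ) (Y : Matrix (Fin n) (Fin p) ℝ) :
    frobNorm (X * Y) ≤ frobNorm X * frobNorm Y := by
  rw [frobNorm, frobNorm, frobNorm, ← Real.sqrt_mul (frobSq_nonneg X)]
  exact Real.sqrt_le_sqrt (frobSq_mul_le X Y)

lemma dot_mulVec_le_frobNorm {k : ℕ} (Z : Matrix (Fin k) (Fin k) ℝ) (w : Fin k → ℝ)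
    (hw : ∑ i, w i ^ 2 = 1) : |w ⬝ᵥ (Z *ᵥ w)| ≤ frobNorm Z := by
  have h1 : w ⬝ᵥ (Z *ᵥ w) = ∑ i, ∑ j, Z i j * (w i * w j) := by
    simp only [dotProduct, Matrix.mulVec, Finset.mul_sum]
    refine Finset.sum_congr rfl fun i _ => Finset.sum_congr rfl fun j _ => by ring
  have h2 : (∑ i, ∑ j, Z i j * (w i * w j)) ^ 2 ≤ frobSq Z * 1 := by
    have key := Finset.sum_mul_sq_le_sq_mul_sq (Finset.univ : Finset (Fin k × Fin k))
      (fun p => Z p.1 p.2) (fun p => w p.1 * w p.2)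
    have e1 : ∑ p : Fin k × Fin k, Z p.1 p.2 * (w p.1 * w p.2)
        = ∑ i, ∑ j, Z i j * (w i * w j) := by
      rw [← Finset.sum_product']; rfl
    have e2 : ∑ p : Fin k × Fin k, (Z p.1 p.2) ^ 2 = frobSq Z := by
      rw [frobSq, ← Finset.sum_product']; rfl
    have e3 : ∑ p : Fin k × Fin k, (w p.1 * w p.2) ^ 2 = 1 := by
      have e4 : ∑ p : Fin k × Fin k, (w p.1 * w p.2) ^ 2 = ∑ i, ∑ j, (w i)^2 * (w j)^2 := by
        rw [← Finset.sum_product']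
        refine Finset.sum_congr rfl fun p _ => by ring
      rw [e4]
      simp [← Finset.mul_sum, ← Finset.sum_mul, hw]
    rw [e1, e2, e3] at key
    simpa using key
  rw [h1]
  have h3 : (∑ i, ∑ j, Z i j * (w i * w j)) ^ 2 ≤ frobSq Z := by simpa using h2
  calc |∑ i, ∑ j, Z i j * (w i * w j)|
      = Real.sqrt ((∑ i, ∑ j, Z i j * (w i * w j)) ^ 2) := (Real.sqrt_sq_eq_abs _).symm
    _ ≤ Real.sqrt (frobSq Z) := Real.sqrt_le_sqrt h3

lemma trace_eq_sum_eigenvalues {k : ℕ} {R : Matrix (Fin k) (Fin k) ℝ} (hR : R.IsHermitian) :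
    R.trace = ∑ i, hR.eigenvalues i := by
  conv_lhs => rw [hR.spectral_theorem]
  rw [Unitary.conjStarAlgAut_apply, Matrix.trace_mul_cycle]
  rw [show (star (IsHermitian.eigenvectorUnitary hR : Matrix (Fin k) (Fin k) ℝ)) *
      (IsHermitian.eigenvectorUnitary hR : Matrix (Fin k) (Fin k) ℝ) = 1 from
    Matrix.UnitaryGroup.star_mul_self _]
  simp [Matrix.trace_diagonal]

lemma eigenvalue_sq_le {k : ℕ} {X Y : Matrix (Fin k) (Fin k) ℝ}
    (hX : X.PosSemidef) (hY : Y.PosSemidef)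
    (hRh : (hX.sqrt - hY.sqrt).IsHermitian) (i : Fin k) :
    (hRh.eigenvalues i) ^ 2 ≤ frobNorm (X - Y) := by
  set S := hX.sqrt with hSdef
  set T := hY.sqrt with hTdef
  have hS := hX.posSemidef_sqrt
  have hT := hY.posSemidef_sqrt
  set w : Fin k → ℝ := ⇑(hRh.eigenvectorBasis i) with hwdef
  set μ : ℝ := hRh.eigenvalues i with hmudef
  have heig : (S - T) *ᵥ w = μ • w := hRh.mulVec_eigenvectorBasis i
  have hwnorm : ∑ j, w j ^ 2 = 1 := by
    have h := hRh.eigenvectorBasis.orthonormal.1 i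
    rw [EuclideanSpace.norm_eq] at h
    have h2 := Real.sqrt_eq_one.mp h
    simpa [sq_abs] using h2
  have hww : w ⬝ᵥ w = 1 := by
    simpa [dotProduct, ← sq] using hwnorm
  have hSw : 0 ≤ w ⬝ᵥ (S *ᵥ w) := by simpa using hS.dotProduct_mulVec_nonneg w
  have hTw : 0 ≤ w ⬝ᵥ (T *ᵥ w) := by simpa using hT.dotProduct_mulVec_nonneg w
  have hsym : ∀ (Z : Matrix (Fin k) (Fin k) ℝ), Zᵀ = Z → ∀ u : Fin k → ℝ,
      w ⬝ᵥ (Z *ᵥ u) = (Z *ᵥ w) ⬝ᵥ u := by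
    intro Z hZ u
    rw [dotProduct_mulVec]
    congr 1
    conv_lhs => rw [← hZ]
    rw [vecMul_transpose]
  have hRsymm : (S - T)ᵀ = S - T := by
    have := hRh
    rwa [Matrix.IsHermitian, conjTranspose_eq_transpose_of_trivial] at this
  have hmu : μ = w ⬝ᵥ (S *ᵥ w) - w ⬝ᵥ (T *ᵥ w) := by
    have h1 : w ⬝ᵥ ((S - T) *ᵥ w) = μ := by
      rw [heig, dotProduct_smul, hww]; simp
    rw [← h1, Matrix.sub_mulVec, dotProduct_sub]
  have hid : w ⬝ᵥ ((X - Y) *ᵥ w) = μ * (w ⬝ᵥ (S *ᵥ w) + w ⬝ᵥ (T *ᵥ w)) := by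
    have h2 : (X - Y) + (X - Y) = (S - T) * (S + T) + (S + T) * (S - T) := by
      have hs2 : S * S = X := hX.sqrt_mul_self
      have ht2 : T * T = Y := hY.sqrt_mul_self
      rw [← hs2, ← ht2]
      noncomm_ring
    have h3 : w ⬝ᵥ (((X - Y) + (X - Y)) *ᵥ w)
        = w ⬝ᵥ ((X - Y) *ᵥ w) + w ⬝ᵥ ((X - Y) *ᵥ w) := by
      rw [Matrix.add_mulVec, dotProduct_add]
    have h4 : w ⬝ᵥ ((((S - T) * (S + T)) + ((S + T) * (S - T))) *ᵥ w)
        = μ * (w ⬝ᵥ ((S + T) *ᵥ w)) + μ * (w ⬝ᵥ ((S + T) *ᵥ w)) := by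
      rw [Matrix.add_mulVec, dotProduct_add]
      congr 1
      · rw [← Matrix.mulVec_mulVec, hsym _ hRsymm, heig, smul_dotProduct]
        simp
      · rw [← Matrix.mulVec_mulVec, heig, Matrix.mulVec_smul, dotProduct_smul]
        simp
    have h5 : w ⬝ᵥ ((S + T) *ᵥ w) = w ⬝ᵥ (S *ᵥ w) + w ⬝ᵥ (T *ᵥ w) := by
      rw [Matrix.add_mulVec, dotProduct_add]
    rw [h2] at h3
    rw [h4, h5] at h3
    linarith
  have habs : |w ⬝ᵥ ((X - Y) *ᵥ w)| ≤ frobNorm (X - Y) :=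
    dot_mulVec_le_frobNorm _ w hwnorm
  rw [hid] at habs
  obtain ⟨hlo, hhi⟩ := abs_le.mp habs
  rcases le_or_gt 0 μ with h | h
  · nlinarith
  · nlinarith

lemma trace_sqrt_sub_le {k : ℕ} {X Y : Matrix (Fin k) (Fin k) ℝ}
    (hX : X.PosSemidef) (hY : Y.PosSemidef) :
    |hX.sqrt.trace - hY.sqrt.trace| ≤ k * Real.sqrt (frobNorm (X - Y)) := by
  have hRh : (hX.sqrt - hY.sqrt).IsHermitian := hX.posSemidef_sqrt.1.sub hY.posSemidef_sqrt.1
  have htr : hX.sqrt.trace - hY.sqrt.trace = ∑ i, hRh.eigenvalues i := by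
    rw [← trace_eq_sum_eigenvalues hRh, Matrix.trace_sub]
  rw [htr]
  calc |∑ i, hRh.eigenvalues i| ≤ ∑ i, |hRh.eigenvalues i| := Finset.abs_sum_le_sum_abs _ _
    _ ≤ ∑ _i : Fin k, Real.sqrt (frobNorm (X - Y)) := by
        refine Finset.sum_le_sum fun i _ => ?_
        rw [← Real.sqrt_sq_eq_abs]
        exact Real.sqrt_le_sqrt (eigenvalue_sq_le hX hY hRh i)
    _ = k * Real.sqrt (frobNorm (X - Y)) := by
        simp [Finset.sum_const, nsmul_eq_mul]

lemma ode_exp_decay (c : ℝ) (f : ℝ → ℝ)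
    (hf : ∀ t, HasDerivAt f (-c * f t) t) (t : ℝ) :
    f t = f 0 * Real.exp (-(c * t)) := by
  have hg : ∀ s, HasDerivAt (fun u => f u * Real.exp (c * u)) 0 s := by
    intro s
    have h1 : HasDerivAt (fun u => Real.exp (c * u)) (c * Real.exp (c * s)) s := by
      have := ((hasDerivAt_id s).const_mul c).exp
      simpa [mul_comm] using this
    have := (hf s).fun_mul h1
    have e : (0:ℝ) = -c * f s * Real.exp (c * s) + f s * (c * Real.exp (c * s)) := by ring
    rw [e]; exact this
  have hconst : ∀ s, f s * Real.exp (c * s) = f 0 * Real.exp (c * 0) := by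
    intro s
    have : ∀ u, (fun u => f u * Real.exp (c * u)) u = (fun u => f u * Real.exp (c * u)) 0 := by
      have hd : Differentiable ℝ (fun u => f u * Real.exp (c * u)) :=
        fun u => (hg u).differentiableAt
      intro u
      exact is_const_of_deriv_eq_zero hd (fun x => (hg x).deriv) u 0
    exact this s
  have h := hconst t
  have hexp : Real.exp (c * t) ≠ 0 := Real.exp_ne_zero _
  field_simp at h
  rw [Real.exp_neg]
  field_simp
  rw [h, mul_zero, Real.exp_zero, mul_one]

lemma trace_transpose_mul_self {m r : ℕ} (A : Matrix (Fin m) (Fin r) ℝ) :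
    (Aᵀ * A).trace = frobSq A := by
  rw [Matrix.trace]
  simp only [Matrix.diag_apply, Matrix.mul_apply, Matrix.transpose_apply, frobSq, sq]
  rw [Finset.sum_comm]

lemma trace_self_mul_transpose {m r : ℕ} (A : Matrix (Fin m) (Fin r) ℝ) :
    (A * Aᵀ).trace = frobSq A := by
  rw [Matrix.trace]
  simp only [Matrix.diag_apply, Matrix.mul_apply, Matrix.transpose_apply, frobSq, sq]

set_option maxHeartbeats 2000000 in
/-- along the gradient flow of the regularized loss
`L(ABᵀ) + (λ/2)(‖A‖_F² + ‖B‖_F²)` (λ, τ > 0, L differentiable with gradient `𝒢`),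
if `‖A(t)‖_F, ‖B(t)‖_F` stay bounded by `M`, then the gap between the
`L2`-regularized loss and the nuclear-norm-regularized loss tends to 0
exponentially as `t → ∞`. -/
theorem losses_coincide_exponentially {m n r : ℕ} (τ lam M : ℝ)
    (hτ : 0 < τ) (hlam : 0 < lam)
    (L : Matrix (Fin m) (Fin n) ℝ → ℝ)
    (𝒢 : Matrix (Fin m) (Fin n) ℝ → Matrix (Fin m) (Fin n) ℝ)
    (hgrad : ∀ W H, HasDerivAt (fun s : ℝ => L (W + s • H)) (∑ i, ∑ j, 𝒢 W i j * H i j) 0)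
    (A A' : ℝ → Matrix (Fin m) (Fin r) ℝ)
    (B B' : ℝ → Matrix (Fin n) (Fin r) ℝ)
    (hderivA : ∀ t i j, HasDerivAt (fun s => A s i j) (A' t i j) t)
    (hderivB : ∀ t i j, HasDerivAt (fun s => B s i j) (B' t i j) t)
    (hflowA : ∀ t, τ • A' t = -(𝒢 (A t * (B t)ᵀ) * B t) - lam • A t)
    (hflowB : ∀ t, τ • B' t = -((𝒢 (A t * (B t)ᵀ))ᵀ * A t) - lam • B t)
    (hbound : ∀ t, frobNorm (A t) ≤ M ∧ frobNorm (B t) ≤ M) :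
    ∃ C c : ℝ, 0 < C ∧ 0 < c ∧ ∀ t, 0 ≤ t →
      |(L (A t * (B t)ᵀ) + lam / 2 * (frobSq (A t) + frobSq (B t))) -
        (L (A t * (B t)ᵀ) + lam * nuclearNorm (A t * (B t)ᵀ))| ≤
      C * Real.exp (-(c * t)) := by
  set Dm : ℝ → Matrix (Fin r) (Fin r) ℝ := fun t => (A t)ᵀ * A t - (B t)ᵀ * B t with hDmdef
  set c : ℝ := 2 * lam / τ with hcdef
  have hc : 0 < c := by positivity
  -- Step 1: matrix identity for the derivative of Dm
  have hmatid : ∀ t,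
      τ • ((A' t)ᵀ * A t + (A t)ᵀ * A' t - ((B' t)ᵀ * B t + (B t)ᵀ * B' t))
        = (-(2 * lam)) • Dm t := by
    intro t
    have e : τ • ((A' t)ᵀ * A t + (A t)ᵀ * A' t - ((B' t)ᵀ * B t + (B t)ᵀ * B' t))
        = (τ • A' t)ᵀ * A t + (A t)ᵀ * (τ • A' t)
          - ((τ • B' t)ᵀ * B t + (B t)ᵀ * (τ • B' t)) := by
      simp [smul_sub, smul_add, Matrix.transpose_smul, Matrix.smul_mul, Matrix.mul_smul]
    rw [e, hflowA t, hflowB t, hDmdef]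
    simp only [Matrix.transpose_sub, Matrix.transpose_neg, Matrix.transpose_mul,
      Matrix.transpose_smul, Matrix.transpose_transpose, Matrix.sub_mul, Matrix.mul_sub,
      Matrix.neg_mul, Matrix.mul_neg, Matrix.smul_mul, Matrix.mul_smul, Matrix.mul_assoc,
      smul_sub, smul_smul]
    module
  -- Step 2: entrywise derivative of Dm
  have hderivDm : ∀ t k l, HasDerivAt (fun s => Dm s k l) (-c * Dm t k l) t := by
    intro t k l
    have hA2 : HasDerivAt (fun s => ∑ i, A s i k * A s i l)
        (∑ i, (A' t i k * A t i l + A t i k * A' t i l)) t :=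
      HasDerivAt.fun_sum fun i _ => (hderivA t i k).mul (hderivA t i l)
    have hB2 : HasDerivAt (fun s => ∑ j, B s j k * B s j l)
        (∑ j, (B' t j k * B t j l + B t j k * B' t j l)) t :=
      HasDerivAt.fun_sum fun j _ => (hderivB t j k).mul (hderivB t j l)
    have h1 : HasDerivAt (fun s => Dm s k l)
        ((∑ i, (A' t i k * A t i l + A t i k * A' t i l))
          - ∑ j, (B' t j k * B t j l + B t j k * B' t j l)) t := by
      simp only [hDmdef, Matrix.sub_apply, Matrix.mul_apply, Matrix.transpose_apply]
      exact hA2.sub hB2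
    have h2 := congrArg (fun Z : Matrix (Fin r) (Fin r) ℝ => Z k l) (hmatid t)
    simp only [Matrix.smul_apply, Matrix.sub_apply, Matrix.add_apply, Matrix.mul_apply,
      Matrix.transpose_apply, smul_eq_mul, Finset.sum_add_distrib] at h2
    have h3 : (∑ i, (A' t i k * A t i l + A t i k * A' t i l))
          - (∑ j, (B' t j k * B t j l + B t j k * B' t j l)) = -c * Dm t k l := by
      have hτ' : τ ≠ 0 := ne_of_gt hτ
      rw [hcdef]
      field_simp
      simp only [Finset.sum_add_distrib] at h2 ⊢
      nlinarith [h2]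
    rw [h3] at h1
    exact h1
  -- Step 3: solve the ODE entrywise
  have hsol : ∀ t k l, Dm t k l = Dm 0 k l * Real.exp (-(c * t)) := by
    intro t k l
    exact ode_exp_decay c (fun s => Dm s k l) (fun s => hderivDm s k l) t
  -- Step 4: decay of Frobenius norm and trace of Dm
  have hfrob : ∀ t, frobNorm (Dm t) = frobNorm (Dm 0) * Real.exp (-(c * t)) := by
    intro t
    have hfs : frobSq (Dm t) = frobSq (Dm 0) * (Real.exp (-(c * t))) ^ 2 := by
      rw [frobSq, frobSq, Finset.sum_mul]
      refine Finset.sum_congr rfl fun k _ => ?_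
      rw [Finset.sum_mul]
      refine Finset.sum_congr rfl fun l _ => ?_
      rw [hsol t k l]; ring
    rw [frobNorm, frobNorm, hfs, Real.sqrt_mul (frobSq_nonneg _),
      Real.sqrt_sq (Real.exp_nonneg _)]
  have htr : ∀ t, (Dm t).trace = (Dm 0).trace * Real.exp (-(c * t)) := by
    intro t
    rw [Matrix.trace, Matrix.trace, Finset.sum_mul]
    exact Finset.sum_congr rfl fun k _ => hsol t k k
  -- constants
  set K0 : ℝ := frobNorm (Dm 0) with hK0def
  set T0 : ℝ := (Dm 0).trace with hT0def
  have hK0 : 0 ≤ K0 := frobNorm_nonneg _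
  have hM : 0 ≤ M := le_trans (frobNorm_nonneg (A 0)) (hbound 0).1
  refine ⟨lam * (m * Real.sqrt (M * M * K0)) + lam / 2 * |T0| + 1, lam / τ, by positivity,
    by positivity, ?_⟩
  intro t ht
  set e₁ : ℝ := Real.exp (-(lam / τ * t)) with he₁def
  have he₁pos : 0 < e₁ := Real.exp_pos _
  have he₁le : e₁ ≤ 1 := by
    rw [he₁def]
    apply Real.exp_le_one_iff.mpr
    have : 0 ≤ lam / τ * t := by positivity
    linarith
  have hesq : Real.exp (-(c * t)) = e₁ ^ 2 := by
    rw [he₁def, sq, ← Real.exp_add, hcdef]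
    congr 1
    ring
  -- per-time gap bound
  have hX := wwT_posSemidef (A t * (B t)ᵀ)
  have hAAt := wwT_posSemidef (A t)
  have hY := hAAt.pow 2
  have hnuc : nuclearNorm (A t * (B t)ᵀ) = hX.sqrt.trace := rfl
  have hYtr : hY.sqrt.trace = frobSq (A t) := by
    rw [hAAt.sqrt_sq, trace_self_mul_transpose]
  have hdiff : (A t * (A t)ᵀ) ^ 2 - (A t * (B t)ᵀ) * (A t * (B t)ᵀ)ᵀ
      = A t * Dm t * (A t)ᵀ := by
    rw [pow_two, hDmdef]
    simp only [Matrix.mul_sub, Matrix.sub_mul, Matrix.transpose_mul, Matrix.transpose_transpose,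
      Matrix.mul_assoc]
  have hkey := trace_sqrt_sub_le hY hX
  rw [hdiff] at hkey
  have hAt := (hbound t).1
  have hAtnn : 0 ≤ frobNorm (A t) := frobNorm_nonneg _
  have hDmnn : 0 ≤ frobNorm (Dm t) := frobNorm_nonneg _
  have hfb : frobNorm (A t * Dm t * (A t)ᵀ) ≤ M * M * frobNorm (Dm t) := by
    have h1 : frobNorm (A t * Dm t * (A t)ᵀ) ≤ frobNorm (A t * Dm t) * frobNorm ((A t)ᵀ) :=
      frobNorm_mul_le _ _
    have h2 : frobNorm (A t * Dm t) ≤ frobNorm (A t) * frobNorm (Dm t) := frobNorm_mul_le _ _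
    have h3 : frobNorm ((A t)ᵀ) = frobNorm (A t) := by
      simp only [frobNorm, frobSq_transpose]
    calc frobNorm (A t * Dm t * (A t)ᵀ) ≤ frobNorm (A t * Dm t) * frobNorm (A t) := by
          exact h3 ▸ h1
      _ ≤ (frobNorm (A t) * frobNorm (Dm t)) * frobNorm (A t) := by
          apply mul_le_mul_of_nonneg_right h2 hAtnn
      _ ≤ (M * frobNorm (Dm t)) * M := by
          apply mul_le_mul (mul_le_mul_of_nonneg_right hAt hDmnn) hAt hAtnn
          positivity
      _ = M * M * frobNorm (Dm t) := by ring
  have hsqrtb : Real.sqrt (frobNorm (A t * Dm t * (A t)ᵀ)) ≤ Real.sqrt (M * M * K0) * e₁ := by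
    have h4 : frobNorm (A t * Dm t * (A t)ᵀ) ≤ (M * M * K0) * e₁ ^ 2 := by
      rw [← hesq]
      calc frobNorm (A t * Dm t * (A t)ᵀ) ≤ M * M * frobNorm (Dm t) := hfb
        _ = M * M * K0 * Real.exp (-(c * t)) := by rw [hfrob t]; ring
    calc Real.sqrt (frobNorm (A t * Dm t * (A t)ᵀ)) ≤ Real.sqrt ((M * M * K0) * e₁ ^ 2) :=
          Real.sqrt_le_sqrt h4
      _ = Real.sqrt (M * M * K0) * e₁ := by
          rw [Real.sqrt_mul (by positivity), Real.sqrt_sq he₁pos.le]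
  -- trace relation
  have htrrel : (Dm t).trace = frobSq (A t) - frobSq (B t) := by
    rw [hDmdef]
    rw [Matrix.trace_sub, trace_transpose_mul_self, trace_transpose_mul_self]
  have htrb : |(Dm t).trace| ≤ |T0| * e₁ ^ 2 := by
    rw [htr t, abs_mul, abs_of_pos (Real.exp_pos _), ← hesq]
  -- final computation
  have hgap : |hY.sqrt.trace - hX.sqrt.trace| ≤ m * (Real.sqrt (M * M * K0) * e₁) :=
    le_trans hkey (mul_le_mul_of_nonneg_left hsqrtb (by positivity))
  have hexpr : (L (A t * (B t)ᵀ) + lam / 2 * (frobSq (A t) + frobSq (B t))) -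
        (L (A t * (B t)ᵀ) + lam * nuclearNorm (A t * (B t)ᵀ))
      = lam * (hY.sqrt.trace - hX.sqrt.trace) - lam / 2 * (Dm t).trace := by
    rw [hnuc, htrrel, ← hYtr]
    ring
  rw [hexpr]
  have he₁sq_le : e₁ ^ 2 ≤ e₁ := by nlinarith
  calc |lam * (hY.sqrt.trace - hX.sqrt.trace) - lam / 2 * (Dm t).trace|
      ≤ lam * |hY.sqrt.trace - hX.sqrt.trace| + lam / 2 * |(Dm t).trace| := by
        have h5 : |lam * (hY.sqrt.trace - hX.sqrt.trace) - lam / 2 * (Dm t).trace|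
            ≤ |lam * (hY.sqrt.trace - hX.sqrt.trace)| + |lam / 2 * (Dm t).trace| := abs_sub _ _
        rw [abs_mul, abs_mul, abs_of_pos hlam, abs_of_pos (by positivity : (0:ℝ) < lam / 2)] at h5
        exact h5
    _ ≤ lam * (m * (Real.sqrt (M * M * K0) * e₁)) + lam / 2 * (|T0| * e₁ ^ 2) :=
        add_le_add (mul_le_mul_of_nonneg_left hgap hlam.le)
          (mul_le_mul_of_nonneg_left htrb (by positivity))
    _ ≤ (lam * (m * Real.sqrt (M * M * K0)) + lam / 2 * |T0| + 1) * Real.exp (-(lam / τ * t)) := by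
        rw [← he₁def]
        nlinarith [he₁pos.le,
          mul_nonneg (mul_nonneg hlam.le (abs_nonneg T0)) (sub_nonneg.mpr he₁sq_le)]
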